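/- Let A be a unital ring with idempotent P, Q = 1-P, and suppose φ is a map with φ(P) central and φ(PAQ) ⊆ PAQ. Then for any M ∈ PAQ and the identity M = p_n(M,P,...,P,Q) (n even) or M = p_n(P,M,P,...,P,Q) (n odd), applying the Lie n-derivation identity yields [M, φ(Q)] = 0. Hence if additionally [N, φ(Q)] = 0 for all N ∈ QAP and the ring satisfies the condition that commuting with all of PAQ and QAP implies centrality, then φ(Q) ∈ Z(A). -/

import Mathlib

/-- The left-nested iterated commutator `p_n(x₁,…,xₙ) = [...[[x₁,x₂],x₃],…,xₙ]`. -/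
def pComm18 {A : Type*} [Ring A] : List A → A
  | [] => 0
  | a :: t => t.foldl (fun x y => x * y - y * x) a

section helpers
variable {A : Type*} [Ring A]

lemma pComm18_cons (a : A) (t : List A) :
    pComm18 (a :: t) = t.foldl (fun x y => x * y - y * x) a := rfl

lemma fz18 (l : List A) : l.foldl (fun x y => x * y - y * x) 0 = 0 := by
  induction l with
  | nil => rfl
  | cons y t ih => simpa using ih

lemma paq18 {P a : A} (hP : P * P = P) (ha : a = P * a * (1 - P)) :
    a * P = 0 ∧ P * a = a ∧ a * (1 - P) = a ∧ (1 - P) * a = 0 := by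
  have hQP : (1 - P) * P = 0 := by rw [sub_mul, one_mul, hP, sub_self]
  have hQQ : (1 - P) * (1 - P) = 1 - P := by
    rw [mul_sub, mul_one, hQP, sub_zero]
  have hPP2 : P * (P * a * (1 - P)) = P * a * (1 - P) := by
    rw [← mul_assoc, ← mul_assoc, hP]
  refine ⟨?_, ?_, ?_, ?_⟩
  · rw [ha, mul_assoc, hQP, mul_zero]
  · rw [ha]; exact hPP2
  · conv_lhs => rw [ha]
    rw [mul_assoc, hQQ, ← ha]
  · conv_lhs => rw [ha]
    rw [← mul_assoc, ← mul_assoc, hQP, zero_mul, zero_mul]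

lemma negpaq18 {P a : A} (ha : a = P * a * (1 - P)) : -a = P * (-a) * (1 - P) := by
  rw [mul_neg, neg_mul, ← ha]

lemma brP18 {P a : A} (hP : P * P = P) (ha : a = P * a * (1 - P)) :
    a * P - P * a = -a := by
  obtain ⟨h1, h2, _, _⟩ := paq18 hP ha
  rw [h1, h2, zero_sub]

lemma brQ18 {P a : A} (hP : P * P = P) (ha : a = P * a * (1 - P)) :
    a * (1 - P) - (1 - P) * a = a := by
  obtain ⟨_, _, h3, h4⟩ := paq18 hP ha
  rw [h3, h4, sub_zero]

lemma frep18 {P : A} (hP : P * P = P) (k : ℕ) :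
    ∀ a : A, a = P * a * (1 - P) →
    (List.replicate k P).foldl (fun x y => x * y - y * x) a
      = if Even k then a else -a := by
  induction k with
  | zero => intro a _; simp
  | succ k ih =>
    intro a ha
    rw [List.replicate_succ, List.foldl_cons, brP18 hP ha, ih (-a) (negpaq18 ha)]
    rcases Nat.even_or_odd k with h | h
    · simp [h, Nat.even_add_one, Nat.not_even_iff_odd, h.add_one]
    · simp [Nat.even_add_one, Nat.not_even_iff_odd.mpr h, h]

lemma fval18 {P a c : A} (hP : P * P = P) (ha : a = P * a * (1 - P)) {l : ℕ}
    (hl : Even l) :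
    (List.replicate l P ++ [c]).foldl (fun x y => x * y - y * x) a
      = a * c - c * a := by
  rw [List.foldl_append, frep18 hP l a ha, if_pos hl]
  simp

lemma fcen18 {z : A} (hz : ∀ g : A, g * z = z * g) (y : A) (t : List A) :
    (y :: t).foldl (fun x y => x * y - y * x) z = 0 := by
  rw [List.foldl_cons]
  have : z * y - y * z = 0 := by rw [← hz y, sub_self]
  rw [this, fz18]

lemma fvanish18 {P : A} (hP : P * P = P) :
    ∀ (l : List A) (a : A), (a = P * a * (1 - P) ∨ a = 0) →
    (∀ y ∈ l, y = P ∨ y = 1 - P ∨ ∀ g : A, g * y = y * g) →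
    (∃ y ∈ l, ∀ g : A, g * y = y * g) →
    l.foldl (fun x y => x * y - y * x) a = 0 := by
  intro l
  induction l with
  | nil => intro a _ _ hex; simp at hex
  | cons y t ih =>
    intro a ha hl hex
    rw [List.foldl_cons]
    by_cases hy : ∀ g : A, g * y = y * g
    · have h0 : a * y - y * a = 0 := by rw [← hy a, sub_self]
      rw [h0, fz18]
    · have hy' : y = P ∨ y = 1 - P := by
        rcases hl y List.mem_cons_self with h | h | h
        · exact Or.inl h
        · exact Or.inr h
        · exact absurd h hy
      have ha' : (a * y - y * a) = P * (a * y - y * a) * (1 - P)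
          ∨ (a * y - y * a) = 0 := by
        rcases ha with ha | rfl
        · rcases hy' with rfl | rfl
          · rw [brP18 hP ha]; exact Or.inl (negpaq18 ha)
          · rw [brQ18 hP ha]; exact Or.inl ha
        · simp
      have hex' : ∃ z ∈ t, ∀ g : A, g * z = z * g := by
        rcases hex with ⟨z, hz, hzc⟩
        rcases List.mem_cons.mp hz with rfl | h
        · exact absurd hzc hy
        · exact ⟨z, h, hzc⟩
      exact ih _ ha' (fun z hz => hl z (List.mem_cons_of_mem _ hz)) hex'

lemma ofFnrep18 {P c : A} (m : ℕ) (g : Fin (m + 1) → A)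
    (hg : ∀ j : Fin (m + 1), (j : ℕ) < m → g j = P) (hc : g (Fin.last m) = c) :
    List.ofFn g = List.replicate m P ++ [c] := by
  apply List.ext_getElem
  · simp
  · intro i h1 h2
    rw [List.getElem_ofFn]
    have hi : i < m + 1 := by simpa using h1
    rcases Nat.lt_or_ge i m with h | h
    · rw [List.getElem_append_left (by simpa using h), List.getElem_replicate]
      exact hg _ (by simpa using h)
    · have him : i = m := by omega
      subst him
      rw [List.getElem_append_right (by simp)]
      simp; exact hc

end helpers

/-- Let `φ` be a nonlinear Lie `n`-derivation on a unital ring with idempotent `P`,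
`Q = 1 - P`, such that `φ(P)` is central and `φ(PAQ) ⊆ PAQ`. Then `[M, φ(Q)] = 0` for all
`M ∈ PAQ`; if moreover `[N, φ(Q)] = 0` for all `N ∈ QAP` and every element commuting with
all of `PAQ` and `QAP` is central, then `φ(Q) ∈ Z(A)`. -/
theorem stmt18 {A : Type*} [Ring A] (P : A) (hP : P * P = P)
    (n : ℕ) (hn : 2 ≤ n) (φ : A → A)
    (hφ : ∀ x : Fin n → A,
      φ (pComm18 (List.ofFn x))
        = ∑ i, pComm18 (List.ofFn (Function.update x i (φ (x i)))))
    (hφP : φ P ∈ Set.center A)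
    (hφ12 : ∀ M : A, M = P * M * (1 - P) → φ M = P * (φ M) * (1 - P))
    (h21 : ∀ N : A, N = (1 - P) * N * P → N * φ (1 - P) - φ (1 - P) * N = 0)
    (hcentcond : ∀ T : A,
      (∀ M : A, M = P * M * (1 - P) → T * M = M * T) →
      (∀ N : A, N = (1 - P) * N * P → T * N = N * T) →
      T ∈ Set.center A) :
    (∀ M : A, M = P * M * (1 - P) → M * φ (1 - P) - φ (1 - P) * M = 0) ∧
    φ (1 - P) ∈ Set.center A := by
  classical
  have hφPc : ∀ g : A, g * φ P = φ P * g := fun g =>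
    (Semigroup.mem_center_iff.mp hφP g)
  have key : ∀ M : A, M = P * M * (1 - P) → M * φ (1 - P) - φ (1 - P) * M = 0 := by
    intro M hM
    obtain ⟨m, rfl⟩ : ∃ m, n = m + 2 := ⟨n - 2, by omega⟩
    rcases Nat.even_or_odd m with hm | hm
    · -- even case: x = (M, P, ..., P, Q)
      set x : Fin (m + 2) → A := fun i =>
        if (i : ℕ) = 0 then M else if (i : ℕ) = m + 1 then 1 - P else P with hxdef
      have hx := hφ x
      have hx0 : x 0 = M := by simp [hxdef]
      have hxlast : x (Fin.last (m + 1)) = 1 - P := by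
        simp only [hxdef, Fin.val_last]
        rw [if_neg (by omega)]
        simp
      have hxmid : ∀ i : Fin (m + 2), 1 ≤ (i : ℕ) → (i : ℕ) ≤ m → x i = P := by
        intro i h1 h2
        simp only [hxdef]
        rw [if_neg (by omega), if_neg (by omega)]
      -- tail of x
      have htail : List.ofFn (fun j : Fin (m + 1) => x j.succ)
          = List.replicate m P ++ [1 - P] := by
        apply ofFnrep18
        · intro j hj
          exact hxmid _ (by simp) (by simpa using hj)
        · have : (Fin.last m).succ = Fin.last (m + 1) := by
            ext; simp
          rw [this, hxlast]
      have hLHS : pComm18 (List.ofFn x) = M := by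
        rw [List.ofFn_succ, hx0, pComm18_cons, htail, fval18 hP hM hm, brQ18 hP hM]
      -- term at 0
      have hterm0 : pComm18 (List.ofFn (Function.update x 0 (φ (x 0)))) = φ M := by
        have hupd : (fun j : Fin (m + 1) => Function.update x 0 (φ (x 0)) j.succ)
            = fun j : Fin (m + 1) => x j.succ := by
          funext j
          rw [Function.update_of_ne (Fin.succ_ne_zero j)]
        rw [List.ofFn_succ, pComm18_cons, hupd, htail, Function.update_self, hx0,
          fval18 hP (hφ12 M hM) hm, brQ18 hP (hφ12 M hM)]
      -- term at last
      have htermlast : pComm18 (List.ofFn (Function.update x (Fin.last (m + 1))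
          (φ (x (Fin.last (m + 1)))))) = M * φ (1 - P) - φ (1 - P) * M := by
        have h0ne : (0 : Fin (m + 2)) ≠ Fin.last (m + 1) := by
          simp [Fin.ext_iff]
        have htail' : List.ofFn (fun j : Fin (m + 1) =>
            Function.update x (Fin.last (m + 1)) (φ (x (Fin.last (m + 1)))) j.succ)
            = List.replicate m P ++ [φ (1 - P)] := by
          apply ofFnrep18
          · intro j hj
            rw [Function.update_of_ne (by simp [Fin.ext_iff]; omega)]
            exact hxmid _ (by simp) (by simpa using hj)
          · have : (Fin.last m).succ = Fin.last (m + 1) := by ext; simp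
            rw [this, Function.update_self, hxlast]
        rw [List.ofFn_succ, pComm18_cons, Function.update_of_ne h0ne, hx0, htail',
          fval18 hP hM hm]
      -- middle terms vanish
      have hmid : ∀ i : Fin (m + 2), i ≠ 0 → i ≠ Fin.last (m + 1) →
          pComm18 (List.ofFn (Function.update x i (φ (x i)))) = 0 := by
        intro i hi0 hil
        have hv1 : 1 ≤ (i : ℕ) := by
          rcases Nat.eq_zero_or_pos (i : ℕ) with h | h
          · exact absurd (Fin.ext h) hi0
          · exact h
        have hv2 : (i : ℕ) ≤ m := by
          have : (i : ℕ) < m + 2 := i.isLt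
          have hne : (i : ℕ) ≠ m + 1 := fun h => hil (Fin.ext (by simpa using h))
          omega
        have hxi : x i = P := hxmid i hv1 hv2
        rw [List.ofFn_succ, pComm18_cons, Function.update_of_ne (Ne.symm hi0), hx0]
        apply fvanish18 hP _ M (Or.inl hM)
        · intro y hy
          rw [List.mem_ofFn] at hy
          obtain ⟨j, rfl⟩ := hy
          beta_reduce
          by_cases hji : j.succ = i
          · rw [hji, Function.update_self, hxi]
            exact Or.inr (Or.inr hφPc)
          · rw [Function.update_of_ne hji]
            simp only [hxdef]
            split_ifs with h1 h2
            · exact absurd h1 (by simp)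
            · exact Or.inr (Or.inl rfl)
            · exact Or.inl rfl
        · refine ⟨φ (x i), ?_, ?_⟩
          · rw [List.mem_ofFn]
            refine ⟨⟨(i : ℕ) - 1, by omega⟩, ?_⟩
            have hsucc : (⟨(i : ℕ) - 1, by omega⟩ : Fin (m + 1)).succ = i := by
              ext; simp; omega
            beta_reduce
            rw [hsucc, Function.update_self]
          · rw [hxi]; exact hφPc
      -- assemble the sum
      have hne : (0 : Fin (m + 2)) ≠ Fin.last (m + 1) := by simp [Fin.ext_iff]
      have hsum : ∑ i, pComm18 (List.ofFn (Function.update x i (φ (x i))))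
          = φ M + (M * φ (1 - P) - φ (1 - P) * M) := by
        rw [Finset.sum_eq_add_of_mem (0 : Fin (m + 2)) (Fin.last (m + 1))
          (Finset.mem_univ _) (Finset.mem_univ _) hne
          (fun c _ hc => hmid c hc.1 hc.2), hterm0, htermlast]
      rw [hLHS, hsum] at hx
      exact (left_eq_add.mp hx)
    · -- odd case: x = (P, M, P, ..., P, Q)
      obtain ⟨l, rfl⟩ : ∃ l, m = l + 1 := by
        rcases hm with ⟨k, hk⟩; exact ⟨2 * k, by omega⟩
      have hl : Even l := Nat.not_odd_iff_even.mp (Nat.odd_add_one.mp hm)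
      set x : Fin (l + 1 + 2) → A := fun i =>
        if (i : ℕ) = 0 then P else if (i : ℕ) = 1 then M
        else if (i : ℕ) = l + 2 then 1 - P else P with hxdef
      have hx := hφ x
      obtain ⟨hMP, hPM, hMQ, hQM⟩ := paq18 hP hM
      obtain ⟨hfMP, hfPM, hfMQ, hfQM⟩ := paq18 hP (hφ12 M hM)
      have hve1 : (((0 : Fin (l + 1 + 1)).succ : Fin (l + 1 + 2)) : ℕ) = 1 := by simp
      have hx0 : x 0 = P := by simp [hxdef]
      have hx1 : x ((0 : Fin (l + 1 + 1)).succ) = M := by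
        simp only [hxdef, hve1]
        simp
      have hxlast : x (Fin.last (l + 2)) = 1 - P := by
        simp only [hxdef, Fin.val_last]
        rw [if_neg (by omega), if_neg (by omega)]
        simp
      have hxmid : ∀ i : Fin (l + 1 + 2), 2 ≤ (i : ℕ) → (i : ℕ) ≤ l + 1 → x i = P := by
        intro i h1 h2
        simp only [hxdef]
        rw [if_neg (by omega), if_neg (by omega), if_neg (by omega)]
      have hpeel : ∀ u : Fin (l + 1 + 2) → A, pComm18 (List.ofFn u)
          = (List.ofFn fun j : Fin (l + 1) => u j.succ.succ).foldl
            (fun a b => a * b - b * a)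
            (u 0 * u ((0 : Fin (l + 1 + 1)).succ)
              - u ((0 : Fin (l + 1 + 1)).succ) * u 0) := by
        intro u
        rw [List.ofFn_succ, pComm18_cons, List.ofFn_succ, List.foldl_cons]
      have ht2 : List.ofFn (fun j : Fin (l + 1) => x j.succ.succ)
          = List.replicate l P ++ [1 - P] := by
        apply ofFnrep18
        · intro j hj
          apply hxmid <;> simp <;> omega
        · have : (Fin.last l).succ.succ = Fin.last (l + 2) := by ext; simp
          rw [this, hxlast]
      have hbase : P * M - M * P = M := by rw [hPM, hMP, sub_zero]
      have hLHS : pComm18 (List.ofFn x) = M := by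
        rw [hpeel x, hx0, hx1, hbase, ht2, fval18 hP hM hl, brQ18 hP hM]
      -- term at position 1
      have hterm1 : pComm18 (List.ofFn (Function.update x ((0 : Fin (l + 1 + 1)).succ)
          (φ (x ((0 : Fin (l + 1 + 1)).succ))))) = φ M := by
        have hne0 : (0 : Fin (l + 1 + 2)) ≠ (0 : Fin (l + 1 + 1)).succ :=
          (Fin.succ_ne_zero _).symm
        have htl : (fun j : Fin (l + 1) =>
            Function.update x ((0 : Fin (l + 1 + 1)).succ)
              (φ (x ((0 : Fin (l + 1 + 1)).succ))) j.succ.succ)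
            = fun j : Fin (l + 1) => x j.succ.succ := by
          funext j
          rw [Function.update_of_ne (show j.succ.succ ≠ (0 : Fin (l + 1 + 1)).succ from
            fun h => Fin.succ_ne_zero j (Fin.succ_injective _ h))]
        rw [hpeel, htl, ht2, Function.update_of_ne hne0, Function.update_self, hx0, hx1,
          hfPM, hfMP, sub_zero, fval18 hP (hφ12 M hM) hl, brQ18 hP (hφ12 M hM)]
      -- term at last position
      have htermlast : pComm18 (List.ofFn (Function.update x (Fin.last (l + 2))
          (φ (x (Fin.last (l + 2)))))) = M * φ (1 - P) - φ (1 - P) * M := by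
        have hne0 : (0 : Fin (l + 1 + 2)) ≠ Fin.last (l + 2) := by
          simp [Fin.ext_iff]
        have hne1 : ((0 : Fin (l + 1 + 1)).succ : Fin (l + 1 + 2)) ≠ Fin.last (l + 2) := by
          simp [Fin.ext_iff]
        have htl : List.ofFn (fun j : Fin (l + 1) =>
            Function.update x (Fin.last (l + 2)) (φ (x (Fin.last (l + 2)))) j.succ.succ)
            = List.replicate l P ++ [φ (1 - P)] := by
          apply ofFnrep18
          · intro j hj
            rw [Function.update_of_ne (by simp [Fin.ext_iff]; omega)]
            apply hxmid <;> simp <;> omega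
          · have : (Fin.last l).succ.succ = Fin.last (l + 2) := by ext; simp
            rw [this, Function.update_self, hxlast]
        rw [hpeel, Function.update_of_ne hne0, Function.update_of_ne hne1, hx0, hx1,
          hbase, htl, fval18 hP hM hl]
      -- all other terms vanish
      have hother : ∀ i : Fin (l + 1 + 2), i ≠ (0 : Fin (l + 1 + 1)).succ →
          i ≠ Fin.last (l + 2) →
          pComm18 (List.ofFn (Function.update x i (φ (x i)))) = 0 := by
        intro i hi1 hil
        have hvne1 : (i : ℕ) ≠ 1 := fun h => hi1 (Fin.ext (by rw [h, hve1]))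
        have hvnel : (i : ℕ) ≠ l + 2 := fun h => hil (Fin.ext (by simpa using h))
        by_cases hi0 : (i : ℕ) = 0
        · -- first position: starts with central φ P
          have hieq : i = 0 := Fin.ext hi0
          subst hieq
          have hxi : x 0 = P := hx0
          rw [hpeel, Function.update_self,
            Function.update_of_ne (Fin.succ_ne_zero _), hx1, hxi]
          have hc : φ P * M - M * φ P = 0 := by rw [← hφPc M, sub_self]
          rw [hc, fz18]
        · -- middle position
          have hv2 : 2 ≤ (i : ℕ) := by omega
          have hvl : (i : ℕ) ≤ l + 1 := by
            have := i.isLt; omega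
          have hxi : x i = P := hxmid i hv2 hvl
          have hne0 : (0 : Fin (l + 1 + 2)) ≠ i := fun h => hi0 (by rw [← h]; simp)
          have hne1 : ((0 : Fin (l + 1 + 1)).succ : Fin (l + 1 + 2)) ≠ i :=
            fun h => hvne1 (by rw [← h, hve1])
          rw [hpeel, Function.update_of_ne hne0, Function.update_of_ne hne1, hx0, hx1,
            hbase]
          apply fvanish18 hP _ M (Or.inl hM)
          · intro y hy
            rw [List.mem_ofFn] at hy
            obtain ⟨j, rfl⟩ := hy
            beta_reduce
            by_cases hji : j.succ.succ = i
            · rw [hji, Function.update_self, hxi]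
              exact Or.inr (Or.inr hφPc)
            · rw [Function.update_of_ne hji]
              simp only [hxdef]
              split_ifs with h1 h2 h3
              · exact absurd h1 (by simp)
              · exact absurd h2 (by simp)
              · exact Or.inr (Or.inl rfl)
              · exact Or.inl rfl
          · refine ⟨φ (x i), ?_, ?_⟩
            · rw [List.mem_ofFn]
              refine ⟨⟨(i : ℕ) - 2, by omega⟩, ?_⟩
              have hsucc : (⟨(i : ℕ) - 2, by omega⟩ : Fin (l + 1)).succ.succ = i := by
                ext; simp; omega
              beta_reduce
              rw [hsucc, Function.update_self]
            · rw [hxi]; exact hφPc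
      have hne : ((0 : Fin (l + 1 + 1)).succ : Fin (l + 1 + 2)) ≠ Fin.last (l + 2) := by
        simp [Fin.ext_iff]
      have hsum : ∑ i, pComm18 (List.ofFn (Function.update x i (φ (x i))))
          = φ M + (M * φ (1 - P) - φ (1 - P) * M) := by
        rw [Finset.sum_eq_add_of_mem ((0 : Fin (l + 1 + 1)).succ) (Fin.last (l + 2))
          (Finset.mem_univ _) (Finset.mem_univ _) hne
          (fun c _ hc => hother c hc.1 hc.2), hterm1, htermlast]
      rw [hLHS, hsum] at hx
      exact (left_eq_add.mp hx)
  refine ⟨key, hcentcond _ (fun M hM => (sub_eq_zero.mp (key M hM)).symm)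
    (fun N hN => (sub_eq_zero.mp (h21 N hN)).symm)⟩
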